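/- Fix n ≥ 1. For each ordered pair (i, j) with i ≠ j let R_{ij} : ℝ³ → ℝ be a C¹ function that is nondecreasing in each of its three arguments, for each i let R_i : ℝ² → ℝ be a C¹ function nondecreasing in each of its two arguments, and let u_1,…,u_n ≥ 0 be real constants. Let x, p, m : ℝ → ℝⁿ be differentiable and satisfy, for all t ∈ ℝ and all i ∈ {1,…,n}: x_i'(t) = Σ_{j≠i} ( R_{ji}(x_j(t), p_j(t), m_i(t)) − R_{ij}(x_i(t), p_i(t), m_j(t)) ) + u_i − R_i(x_i(t), p_i(t)), together with p_i'(t) = x_i'(t) and m_i'(t) = −x_i'(t) for all t and i. Then the function t ↦ Σ_{i=1}^n |x_i'(t)| is nonincreasing on ℝ. -/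

import Mathlib

open Finset


lemma sgB_mul_le (b : Bool) (c : ℝ) : (cond b 1 (-1) : ℝ) * c ≤ |c| := by
  cases b <;> simp [neg_le_abs, le_abs_self]

lemma sgB_mul_self (w : ℝ) : (cond (decide (0 ≤ w)) 1 (-1) : ℝ) * w = |w| := by
  by_cases h : 0 ≤ w
  · simp [h, abs_of_nonneg h]
  · simp [h, abs_of_neg (lt_of_not_ge h)]

lemma mono_hasDerivAt_nonneg {f : ℝ → ℝ} {d t : ℝ} (hm : Monotone f)
    (hd : HasDerivAt f d t) : 0 ≤ d := by
  have h2 : Filter.Tendsto (slope f t) (nhdsWithin t (Set.Ioi t)) (nhds d) :=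
    (hasDerivAt_iff_tendsto_slope.1 hd).mono_left
      (nhdsWithin_mono _ (fun z hz => ne_of_gt hz))
  refine ge_of_tendsto h2 ?_
  filter_upwards [self_mem_nhdsWithin] with z hz
  rw [slope_def_field]
  exact div_nonneg (sub_nonneg.2 (hm (le_of_lt hz))) (sub_nonneg.2 (le_of_lt hz))

lemma triple_deriv {F : ℝ → ℝ → ℝ → ℝ}
    (hC : ContDiff ℝ 1 (fun q : ℝ × ℝ × ℝ => F q.1 q.2.1 q.2.2))
    (h1 : ∀ b c, Monotone (fun a => F a b c))
    (h2 : ∀ a c, Monotone (fun b => F a b c))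
    (h3 : ∀ a b, Monotone (fun c => F a b c))
    {f g h : ℝ → ℝ} {t vf vh : ℝ}
    (hf : HasDerivAt f vf t) (hg : HasDerivAt g vf t) (hh : HasDerivAt h vh t) :
    ∃ A B : ℝ, 0 ≤ A ∧ 0 ≤ B ∧
      HasDerivAt (fun s => F (f s) (g s) (h s)) (vf * A + vh * B) t := by
  set Fq : ℝ × ℝ × ℝ → ℝ := fun q => F q.1 q.2.1 q.2.2 with hFq
  have hdF : Differentiable ℝ Fq := hC.differentiable one_ne_zero
  set L : ℝ × ℝ × ℝ →L[ℝ] ℝ := fderiv ℝ Fq (f t, g t, h t) with hL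
  refine ⟨L (1, 1, 0), L (0, 0, 1), ?_, ?_, ?_⟩
  · -- A nonneg
    have hcurve : HasDerivAt (fun e : ℝ => (f t + e, g t + e, h t))
        ((1 : ℝ), (1 : ℝ), (0 : ℝ)) 0 :=
      HasDerivAt.prodMk ((hasDerivAt_id 0).const_add (f t))
        (HasDerivAt.prodMk ((hasDerivAt_id 0).const_add (g t)) (hasDerivAt_const 0 (h t)))
    have hFd : HasFDerivAt Fq L (f t + 0, g t + 0, h t) := by
      simpa using (hdF (f t, g t, h t)).hasFDerivAt
    have hs : HasDerivAt (fun e : ℝ => F (f t + e) (g t + e) (h t)) (L (1, 1, 0)) 0 :=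
      by have := hFd.comp_hasDerivAt 0 hcurve; exact this
    refine mono_hasDerivAt_nonneg ?_ hs
    intro e e' he
    calc F (f t + e) (g t + e) (h t) ≤ F (f t + e') (g t + e) (h t) :=
          h1 _ _ (by linarith)
      _ ≤ F (f t + e') (g t + e') (h t) := h2 _ _ (by linarith)
  · -- B nonneg
    have hcurve : HasDerivAt (fun c : ℝ => (f t, g t, c))
        ((0 : ℝ), (0 : ℝ), (1 : ℝ)) (h t) :=
      HasDerivAt.prodMk (hasDerivAt_const (h t) (f t))
        (HasDerivAt.prodMk (hasDerivAt_const (h t) (g t)) (hasDerivAt_id (h t)))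
    have hFd : HasFDerivAt Fq L (f t, g t, h t) := (hdF _).hasFDerivAt
    have hs : HasDerivAt (fun c : ℝ => F (f t) (g t) c) (L (0, 0, 1)) (h t) :=
      by have := hFd.comp_hasDerivAt (h t) hcurve; exact this
    exact mono_hasDerivAt_nonneg (h3 _ _) hs
  · -- derivative formula
    have hcurve : HasDerivAt (fun s => (f s, g s, h s)) (vf, vf, vh) t :=
      HasDerivAt.prodMk hf (HasDerivAt.prodMk hg hh)
    have hFd : HasFDerivAt Fq L (f t, g t, h t) := (hdF _).hasFDerivAt
    have hs : HasDerivAt (fun s => F (f s) (g s) (h s)) (L (vf, vf, vh)) t :=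
      by have := hFd.comp_hasDerivAt t hcurve; exact this
    have hdecomp : (vf, vf, vh) =
        vf • ((1 : ℝ), (1 : ℝ), (0 : ℝ)) + vh • ((0 : ℝ), (0 : ℝ), (1 : ℝ)) := by
      simp [Prod.ext_iff]
    rw [hdecomp, map_add, map_smul, map_smul, smul_eq_mul, smul_eq_mul] at hs
    exact hs

lemma double_deriv {G : ℝ → ℝ → ℝ}
    (hC : ContDiff ℝ 1 (fun q : ℝ × ℝ => G q.1 q.2))
    (h1 : ∀ b, Monotone (fun a => G a b))
    (h2 : ∀ a, Monotone (fun b => G a b))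
    {f g : ℝ → ℝ} {t vf : ℝ}
    (hf : HasDerivAt f vf t) (hg : HasDerivAt g vf t) :
    ∃ C : ℝ, 0 ≤ C ∧ HasDerivAt (fun s => G (f s) (g s)) (vf * C) t := by
  set Gq : ℝ × ℝ → ℝ := fun q => G q.1 q.2 with hGq
  have hdG : Differentiable ℝ Gq := hC.differentiable one_ne_zero
  set L : ℝ × ℝ →L[ℝ] ℝ := fderiv ℝ Gq (f t, g t) with hL
  refine ⟨L (1, 1), ?_, ?_⟩
  · have hcurve : HasDerivAt (fun e : ℝ => (f t + e, g t + e)) ((1 : ℝ), (1 : ℝ)) 0 :=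
      HasDerivAt.prodMk ((hasDerivAt_id 0).const_add (f t)) ((hasDerivAt_id 0).const_add (g t))
    have hFd : HasFDerivAt Gq L (f t + 0, g t + 0) := by
      simpa using (hdG (f t, g t)).hasFDerivAt
    have hs : HasDerivAt (fun e : ℝ => G (f t + e) (g t + e)) (L (1, 1)) 0 :=
      by have := hFd.comp_hasDerivAt 0 hcurve; exact this
    refine mono_hasDerivAt_nonneg ?_ hs
    intro e e' he
    calc G (f t + e) (g t + e) ≤ G (f t + e') (g t + e) := h1 _ (by linarith)
      _ ≤ G (f t + e') (g t + e') := h2 _ (by linarith)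
  · have hcurve : HasDerivAt (fun s => (f s, g s)) (vf, vf) t := HasDerivAt.prodMk hf hg
    have hs : HasDerivAt (fun s => G (f s) (g s)) (L (vf, vf)) t :=
      ((hdG _).hasFDerivAt).comp_hasDerivAt t hcurve
    have hdecomp : ((vf, vf) : ℝ × ℝ) = vf • ((1 : ℝ), (1 : ℝ)) := by
      simp [Prod.ext_iff]
    rw [hdecomp, map_smul, smul_eq_mul] at hs
    exact hs




lemma sign_sum_nonpos {n : ℕ} (σ w : Fin n → ℝ) (A B : Fin n → Fin n → ℝ) (C : Fin n → ℝ)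
    (hA : ∀ i j, i ≠ j → 0 ≤ A i j) (hB : ∀ i j, i ≠ j → 0 ≤ B i j) (hC : ∀ i, 0 ≤ C i)
    (hσ : ∀ i c, σ i * c ≤ |c|) (hs : ∀ i, σ i * w i = |w i|) :
    ∑ i, σ i * ((∑ j ∈ Finset.univ.erase i,
      ((w j * A j i + (-(w i)) * B j i) - (w i * A i j + (-(w j)) * B i j))) - w i * C i) ≤ 0 := by
  have expand : (∑ i, σ i * ((∑ j ∈ Finset.univ.erase i,
        ((w j * A j i + (-(w i)) * B j i) - (w i * A i j + (-(w j)) * B i j))) - w i * C i))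
      = ((∑ i, ∑ j ∈ Finset.univ.erase i, σ i * (w j * A j i + (-(w i)) * B j i))
          - (∑ i, ∑ j ∈ Finset.univ.erase i, σ i * (w i * A i j + (-(w j)) * B i j)))
        - ∑ i, σ i * (w i * C i) := by
    simp only [mul_sub, Finset.mul_sum, Finset.sum_sub_distrib]
  have swap : (∑ i, ∑ j ∈ Finset.univ.erase i, σ i * (w j * A j i + (-(w i)) * B j i))
      = ∑ i, ∑ j ∈ Finset.univ.erase i, σ j * (w i * A i j + (-(w j)) * B i j) := by
    refine Finset.sum_comm' ?_
    intro i j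
    simp [Finset.mem_erase, ne_comm]
  rw [expand, swap]
  have h1 : (∑ i, ∑ j ∈ Finset.univ.erase i, σ j * (w i * A i j + (-(w j)) * B i j))
      ≤ ∑ i, ∑ j ∈ Finset.univ.erase i, σ i * (w i * A i j + (-(w j)) * B i j) := by
    refine Finset.sum_le_sum fun i _ => Finset.sum_le_sum fun j hj => ?_
    have hij : i ≠ j := fun h => (Finset.mem_erase.1 hj).1 h.symm
    have hA' := hA i j hij
    have hB' := hB i j hij
    have h2 : 0 ≤ A i j * (|w i| - σ j * w i) :=
      mul_nonneg hA' (sub_nonneg.2 (hσ j (w i)))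
    have h3 : 0 ≤ B i j * (|w j| - σ i * w j) :=
      mul_nonneg hB' (sub_nonneg.2 (hσ i (w j)))
    nlinarith [hs i, hs j]
  have h2 : (0:ℝ) ≤ ∑ i, σ i * (w i * C i) := by
    refine Finset.sum_nonneg fun i _ => ?_
    have : σ i * (w i * C i) = |w i| * C i := by rw [← hs i]; ring
    rw [this]
    exact mul_nonneg (abs_nonneg _) (hC i)
  linarith

/-- For a catalyst/dimer modification of a linear network — reaction `X i → X j`
has rate `R i j` depending monotonically on `x i`, the dimer concentration `p i`
and the catalyst concentration `m j`, outflow `X i → ∅` has rate `Rout i (x i) (p i)`,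
inflows are constant, and `p i' = x i'`, `m i' = -x i'` — the Sum-of-Currents
function `V(t) = Σ_i |x_i'(t)|` is nonincreasing along every trajectory. -/
theorem soc_rlf_catalyst_dimer (n : ℕ) (hn : 1 ≤ n)
    (R : Fin n → Fin n → ℝ → ℝ → ℝ → ℝ) (Rout : Fin n → ℝ → ℝ → ℝ) (u : Fin n → ℝ)
    (hRC1 : ∀ i j, i ≠ j →
      ContDiff ℝ 1 (fun q : ℝ × ℝ × ℝ => R i j q.1 q.2.1 q.2.2))
    (hRmono1 : ∀ i j, i ≠ j → ∀ b c : ℝ, Monotone (fun a => R i j a b c))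
    (hRmono2 : ∀ i j, i ≠ j → ∀ a c : ℝ, Monotone (fun b => R i j a b c))
    (hRmono3 : ∀ i j, i ≠ j → ∀ a b : ℝ, Monotone (fun c => R i j a b c))
    (hRoC1 : ∀ i, ContDiff ℝ 1 (fun q : ℝ × ℝ => Rout i q.1 q.2))
    (hRomono1 : ∀ i, ∀ b : ℝ, Monotone (fun a => Rout i a b))
    (hRomono2 : ∀ i, ∀ a : ℝ, Monotone (fun b => Rout i a b))
    (hu : ∀ i, 0 ≤ u i)
    (x p m : ℝ → Fin n → ℝ)
    (hx : ∀ i, Differentiable ℝ (fun t => x t i))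
    (hp : ∀ i, Differentiable ℝ (fun t => p t i))
    (hm : ∀ i, Differentiable ℝ (fun t => m t i))
    (hode : ∀ t : ℝ, ∀ i : Fin n, deriv (fun s => x s i) t =
      (∑ j ∈ Finset.univ.erase i,
        (R j i (x t j) (p t j) (m t i) - R i j (x t i) (p t i) (m t j))) + u i
        - Rout i (x t i) (p t i))
    (hpode : ∀ t : ℝ, ∀ i : Fin n,
      deriv (fun s => p s i) t = deriv (fun s => x s i) t)
    (hmode : ∀ t : ℝ, ∀ i : Fin n,
      deriv (fun s => m s i) t = -deriv (fun s => x s i) t) :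
    Antitone (fun t : ℝ => ∑ i : Fin n, |deriv (fun s => x s i) t|) := by
  suffices h : ∀ v : Fin n → ℝ → ℝ, (∀ i t, v i t = deriv (fun s => x s i) t) →
      Antitone (fun t : ℝ => ∑ i : Fin n, |v i t|) by
    exact h (fun i t => deriv (fun s => x s i) t) (fun _ _ => rfl)
  intro v hv
  -- component derivatives
  have hxd : ∀ (i : Fin n) (t : ℝ), HasDerivAt (fun s => x s i) (v i t) t := by
    intro i t; rw [hv i t]; exact (hx i t).hasDerivAt
  have hpd : ∀ (i : Fin n) (t : ℝ), HasDerivAt (fun s => p s i) (v i t) t := by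
    intro i t; rw [hv i t, ← hpode t i]; exact (hp i t).hasDerivAt
  have hmd : ∀ (i : Fin n) (t : ℝ), HasDerivAt (fun s => m s i) (-(v i t)) t := by
    intro i t; rw [hv i t, ← hmode t i]; exact (hm i t).hasDerivAt
  -- coefficients for reaction terms
  have hpair : ∀ (i j : Fin n) (t : ℝ), ∃ A B : ℝ, i ≠ j →
      (0 ≤ A ∧ 0 ≤ B ∧
        HasDerivAt (fun s => R i j (x s i) (p s i) (m s j))
          (v i t * A + (-(v j t)) * B) t) := by
    intro i j t
    by_cases hij : i = j
    · exact ⟨0, 0, fun h => absurd hij h⟩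
    · obtain ⟨A, B, hA, hB, hd⟩ := triple_deriv (hRC1 i j hij) (hRmono1 i j hij)
        (hRmono2 i j hij) (hRmono3 i j hij) (hxd i t) (hpd i t) (hmd j t)
      exact ⟨A, B, fun _ => ⟨hA, hB, hd⟩⟩
  choose α β hαβ using hpair
  have hout : ∀ (i : Fin n) (t : ℝ), ∃ C : ℝ, 0 ≤ C ∧
      HasDerivAt (fun s => Rout i (x s i) (p s i)) (v i t * C) t := by
    intro i t
    exact double_deriv (hRoC1 i) (hRomono1 i) (hRomono2 i) (hxd i t) (hpd i t)
  choose γ hγ hγd using hout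
  -- derivative of v i
  have hvd : ∀ (i : Fin n) (t : ℝ), HasDerivAt (v i)
      ((∑ j ∈ Finset.univ.erase i,
        ((v j t * α j i t + (-(v i t)) * β j i t)
          - (v i t * α i j t + (-(v j t)) * β i j t))) - v i t * γ i t) t := by
    intro i t
    refine HasDerivAt.congr_of_eventuallyEq ?_
      (Filter.Eventually.of_forall fun s => (hv i s).trans (hode s i))
    refine HasDerivAt.sub (HasDerivAt.add_const (u i) ?_) (hγd i t)
    refine HasDerivAt.fun_sum fun j hj => ?_
    have hji : j ≠ i := (Finset.mem_erase.1 hj).1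
    exact HasDerivAt.sub ((hαβ j i t hji).2.2) ((hαβ i j t (Ne.symm hji)).2.2)
  have hvcont : ∀ i, Continuous (v i) := by
    intro i
    have hdiff : Differentiable ℝ (v i) := fun t => (hvd i t).differentiableAt
    exact hdiff.continuous
  -- packaged signed-sum derivative
  have hgd : ∀ (s : Fin n → Bool) (t : ℝ), ∃ D : ℝ,
      HasDerivAt (fun z => ∑ i, (cond (s i) 1 (-1) : ℝ) * v i z) D t ∧
      ((∀ i, (cond (s i) 1 (-1) : ℝ) * v i t = |v i t|) → D ≤ 0) := by
    intro s t
    refine ⟨∑ i, (cond (s i) 1 (-1) : ℝ) *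
      ((∑ j ∈ Finset.univ.erase i,
        ((v j t * α j i t + (-(v i t)) * β j i t)
          - (v i t * α i j t + (-(v j t)) * β i j t))) - v i t * γ i t), ?_, ?_⟩
    · exact HasDerivAt.fun_sum fun i _ => HasDerivAt.const_mul _ (hvd i t)
    · intro hs
      exact sign_sum_nonpos (fun i => (cond (s i) 1 (-1) : ℝ)) (fun i => v i t)
        (fun i j => α i j t) (fun i j => β i j t) (fun i => γ i t)
        (fun i j hij => (hαβ i j t hij).1) (fun i j hij => (hαβ i j t hij).2.1)
        (fun i => hγ i t) (fun i c => sgB_mul_le (s i) c) hs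
  -- main antitone argument
  intro a b hab
  simp only
  have hVcont : Continuous (fun t : ℝ => ∑ i, |v i t|) :=
    continuous_finset_sum _ fun i _ => (hvcont i).abs
  have bound : ∀ t ∈ Set.Ico a b, ∀ r : ℝ, (fun _ : ℝ => (0:ℝ)) t < r →
      ∃ᶠ z in nhdsWithin t (Set.Ioi t),
        slope (fun t : ℝ => ∑ i, |v i t|) t z < r := by
    intro t _ r hr
    have hev : ∀ᶠ z in nhdsWithin t (Set.Ioi t), ∀ s : Fin n → Bool,
        (∑ i, (cond (s i) 1 (-1) : ℝ) * v i z) < (∑ i, |v i t|) + r * (z - t) := by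
      rw [Filter.eventually_all]
      intro s
      obtain ⟨D, hD, hD0⟩ := hgd s t
      have hle : (∑ i, (cond (s i) 1 (-1) : ℝ) * v i t) ≤ ∑ i, |v i t| :=
        Finset.sum_le_sum fun i _ => sgB_mul_le (s i) (v i t)
      rcases eq_or_lt_of_le hle with heq | hlt
      · have hterm : ∀ i, (cond (s i) 1 (-1) : ℝ) * v i t = |v i t| := fun i =>
          (Finset.sum_eq_sum_iff_of_le fun i _ => sgB_mul_le (s i) (v i t)).1 heq
            i (Finset.mem_univ i)
        have hDr : D < r := lt_of_le_of_lt (hD0 hterm) hr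
        have hslope : Filter.Tendsto
            (slope (fun z => ∑ i, (cond (s i) 1 (-1) : ℝ) * v i z) t)
            (nhdsWithin t (Set.Ioi t)) (nhds D) :=
          (hasDerivAt_iff_tendsto_slope.1 hD).mono_left
            (nhdsWithin_mono _ fun z hz => ne_of_gt hz)
        filter_upwards [hslope.eventually_lt_const hDr, self_mem_nhdsWithin] with z hz hzt
        have hzt' : (0:ℝ) < z - t := sub_pos.2 hzt
        rw [slope_def_field, div_lt_iff₀ hzt'] at hz
        linarith
      · have hgc : Continuous (fun z => ∑ i, (cond (s i) 1 (-1) : ℝ) * v i z) :=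
          continuous_finset_sum _ fun i _ => continuous_const.mul (hvcont i)
        have hev' : ∀ᶠ z in nhds t,
            (∑ i, (cond (s i) 1 (-1) : ℝ) * v i z) < ∑ i, |v i t| :=
          (hgc.tendsto t).eventually_lt_const hlt
        filter_upwards [nhdsWithin_le_nhds hev', self_mem_nhdsWithin] with z hz hzt
        have : (0:ℝ) < r * (z - t) := mul_pos hr (sub_pos.2 hzt)
        linarith
    have hev2 : ∀ᶠ z in nhdsWithin t (Set.Ioi t),
        slope (fun t : ℝ => ∑ i, |v i t|) t z < r := by
      filter_upwards [hev, self_mem_nhdsWithin] with z hz hzt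
      have hVz : (∑ i, |v i z|)
          = ∑ i, (cond (decide (0 ≤ v i z)) 1 (-1) : ℝ) * v i z :=
        Finset.sum_congr rfl fun i _ => (sgB_mul_self (v i z)).symm
      have h2 := hz fun i => decide (0 ≤ v i z)
      rw [slope_def_field, div_lt_iff₀ (sub_pos.2 hzt)]
      rw [hVz]
      linarith
    exact hev2.frequently
  have := image_le_of_liminf_slope_right_le_deriv_boundary
    (f := fun t : ℝ => ∑ i, |v i t|) (a := a) (b := b)
    (B := fun _ => ∑ i, |v i a|) (B' := fun _ => (0:ℝ))
    hVcont.continuousOn (le_refl _) continuousOn_const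
    (fun z _ => hasDerivWithinAt_const z _ _) bound
  exact this (Set.right_mem_Icc.2 hab)
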